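/- arXiv:1410.0739 — 3 statements merged into one kernel-verified Lean document; each statement's English description precedes it below -/
import Mathlib

section
/- Let ξ be a random variable, and let C₁ > 0, q > 0 and r be constants such that max(P(ξ ≥ x), P(ξ ≤ −x)) ≤ exp(−C₁ x^q (ln x)^{−q r}) for all x > e. Then there exists a constant C₃ = C₃(C₁, q, r) < ∞ such that for all p ≥ 4: |ξ|_p ≤ C₃ · p^{1/q} · (ln p)^r. -/
set_option maxHeartbeats 4000000


open MeasureTheory ProbabilityTheory Real Filter Finset
open scoped ENNReal

/-- The Lebesgue `L^p` moment norm `|f|_p = (E |f|^p)^{1/p}` (real exponent). -/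
noncomputable def Lnorm {Ω : Type*} [MeasurableSpace Ω] (μ : Measure Ω) (p : ℝ)
    (f : Ω → ℝ) : ℝ :=
  (∫ ω, |f ω| ^ p ∂μ) ^ (1 / p)

/-- Osekowski's function `Os(p) = 4√2 (p/4+1)^{1/p} (1 + p / ln(p/2))`. -/
noncomputable def Os (p : ℝ) : ℝ :=
  4 * Real.sqrt 2 * (p / 4 + 1) ^ (1 / p) * (1 + p / Real.log (p / 2))

/-- The Osekowski constant `K_Os = sup_{p ≥ 4} Os(p) ln p / p`. -/
noncomputable def KOs : ℝ :=
  sSup ((fun p => Os p * Real.log p / p) '' {p : ℝ | 4 ≤ p})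

section AuxStmt11

lemma log4_gt_one : (1:ℝ) < Real.log 4 := by
  have h : Real.exp 1 < 4 := by linarith [Real.exp_one_lt_d9]
  calc (1:ℝ) = Real.log (Real.exp 1) := (Real.log_exp 1).symm
    _ < Real.log 4 := Real.log_lt_log (Real.exp_pos 1) h

lemma log_le_two_sqrt {y : ℝ} (hy : 0 < y) : Real.log y ≤ 2 * Real.sqrt y := by
  have h1 : Real.log (Real.sqrt y) ≤ Real.sqrt y - 1 :=
    Real.log_le_sub_one_of_pos (Real.sqrt_pos.mpr hy)
  rw [Real.log_sqrt hy.le] at h1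
  nlinarith [Real.sqrt_nonneg y]

lemma key_choice (C₁ q r : ℝ) (hC₁ : 0 < C₁) (hq : 0 < q) :
    ∃ c : ℝ, 1 ≤ c ∧ ∀ p : ℝ, 4 ≤ p →
      (2 ≤ Real.log (c * p ^ (1/q) * Real.log p ^ r)) ∧
      (∀ k : ℕ, ((k : ℝ) + ((k : ℝ) + 1) * p) * Real.log 2 ≤
        C₁ * (c * p ^ (1/q) * Real.log p ^ r * 2 ^ k) ^ q *
          Real.log (c * p ^ (1/q) * Real.log p ^ r * 2 ^ k) ^ (-(q * r))) := by
  have hlog2 : (0:ℝ) < Real.log 2 := Real.log_pos (by norm_num)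
  have hlog2' : Real.log 2 ≤ 1 := by
    have := Real.log_le_sub_one_of_pos (show (0:ℝ) < 2 by norm_num); linarith
  have hlog4 : (1:ℝ) < Real.log 4 := log4_gt_one
  set a : ℝ := max (q*r) 0 with ha_def
  have ha0 : 0 ≤ a := le_max_right _ _
  set m : ℝ := a + 1 with hm_def
  have hm1 : 1 ≤ m := by rw [hm_def]; linarith
  have hm0 : 0 < m := by linarith
  set ε : ℝ := q * Real.log 2 / m with hε_def
  have hε0 : 0 < ε := by positivity
  set S : ℝ := (1 + 1/ε) ^ m with hS_def
  have hS0 : 0 < S := by positivity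
  set c₂ : ℝ := 2 * Real.log 2 * S with hc₂_def
  have hc₂0 : 0 < c₂ := by positivity
  set β : ℝ := q / (2 * a) with hβ_def
  set Λ₀ : ℝ := 1/(β * Real.log 4) + 1/q + |r| with hΛ₀_def
  clear_value a m ε S c₂ β Λ₀
  set c : ℝ := max (Real.exp (2*q*r^2 + 2))
      (max ((c₂ * (2*q) ^ (-(q*r)) / C₁ + 1) ^ (1/q))
           ((c₂ * Λ₀ ^ a / C₁ + 1) ^ (2/q))) with hc_def
  have hc_exp : Real.exp (2*q*r^2 + 2) ≤ c := le_max_left _ _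
  have hcW1 : (c₂ * (2*q) ^ (-(q*r)) / C₁ + 1) ^ (1/q) ≤ c := by
    rw [hc_def]; exact le_trans (le_max_left _ _) (le_max_right _ _)
  have hcW2 : (c₂ * Λ₀ ^ a / C₁ + 1) ^ (2/q) ≤ c := by
    rw [hc_def]; exact le_trans (le_max_right _ _) (le_max_right _ _)
  clear_value c
  have hc1 : 1 ≤ c := by
    refine le_trans ?_ hc_exp
    rw [← Real.exp_zero]
    apply Real.exp_le_exp.mpr
    nlinarith [sq_nonneg r]
  have hc0 : 0 < c := lt_of_lt_of_le one_pos hc1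
  have hlnc : 2*q*r^2 + 2 ≤ Real.log c := by
    calc 2*q*r^2 + 2 = Real.log (Real.exp (2*q*r^2+2)) := (Real.log_exp _).symm
      _ ≤ Real.log c := Real.log_le_log (Real.exp_pos _) hc_exp
  have hlnc0 : 0 ≤ Real.log c := by nlinarith [sq_nonneg r]
  -- the key property of S:  (k+1)^m ≤ S * 2^(k*q)
  have hSbound : ∀ k : ℕ, ((k:ℝ) + 1) ^ m ≤ S * (2:ℝ) ^ ((k:ℝ) * q) := by
    intro k
    have hek : (1:ℝ) ≤ Real.exp (ε * k) := Real.one_le_exp (by positivity)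
    have hek2 : ε * k ≤ Real.exp (ε * k) := by
      have := Real.add_one_le_exp (ε * k); linarith
    have h1 : (k:ℝ) + 1 ≤ (1 + 1/ε) * Real.exp (ε * k) := by
      have hk : (k:ℝ) ≤ Real.exp (ε * k) / ε := by
        rw [le_div_iff₀ hε0]; nlinarith
      have he : (1 + 1/ε) * Real.exp (ε * k) = Real.exp (ε * k) + Real.exp (ε*k)/ε := by
        field_simp
      rw [he]; linarith
    calc ((k:ℝ) + 1) ^ m ≤ ((1 + 1/ε) * Real.exp (ε * k)) ^ m :=
          Real.rpow_le_rpow (by positivity) h1 hm0.le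
      _ = (1 + 1/ε) ^ m * (Real.exp (ε * k)) ^ m := Real.mul_rpow (by positivity) (by positivity)
      _ = S * Real.exp (ε * k * m) := by rw [← Real.exp_mul, hS_def]
      _ = S * (2:ℝ) ^ ((k:ℝ) * q) := by
          congr 1
          rw [Real.rpow_def_of_pos (by norm_num : (0:ℝ) < 2)]
          congr 1
          rw [hε_def]; field_simp
  refine ⟨c, hc1, ?_⟩
  intro p hp
  have hp0 : (0:ℝ) < p := by linarith
  have hp1 : (1:ℝ) ≤ p := by linarith
  have hlogp : 1 < Real.log p := lt_of_lt_of_le hlog4 (Real.log_le_log (by norm_num) hp)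
  have hlogp0 : 0 < Real.log p := by linarith
  set T : ℝ := c * p ^ (1/q) * Real.log p ^ r with hT_def
  have hT0 : 0 < T := by positivity
  have hlogT_eq : Real.log T = Real.log c + (1/q) * Real.log p + r * Real.log (Real.log p) := by
    rw [hT_def, Real.log_mul (by positivity) (by positivity),
      Real.log_mul (by positivity) (by positivity), Real.log_rpow hp0, Real.log_rpow hlogp0]
  -- lower bound for log T :  (1/(2q)) log p + 2 ≤ log T
  have hlogT_lb : (1/(2*q)) * Real.log p + 2 ≤ Real.log T := by
    set t : ℝ := Real.sqrt (Real.log p) with ht_def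
    have ht2 : t^2 = Real.log p := Real.sq_sqrt hlogp0.le
    have ht0 : 0 ≤ t := Real.sqrt_nonneg _
    have hloglog0 : 0 ≤ Real.log (Real.log p) := Real.log_nonneg hlogp.le
    have hloglog : Real.log (Real.log p) ≤ 2 * t := log_le_two_sqrt hlogp0
    have hrlog : -(|r| * (2*t)) ≤ r * Real.log (Real.log p) := by
      have h1 : -|r| * Real.log (Real.log p) ≤ r * Real.log (Real.log p) :=
        mul_le_mul_of_nonneg_right (neg_abs_le r) hloglog0
      have h2 : -|r| * (2*t) ≤ -|r| * Real.log (Real.log p) :=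
        mul_le_mul_of_nonpos_left hloglog (by simpa using abs_nonneg r)
      calc -(|r| * (2*t)) = -|r| * (2*t) := by ring
        _ ≤ -|r| * Real.log (Real.log p) := h2
        _ ≤ r * Real.log (Real.log p) := h1
    have hkey : Real.log p - 4*q*(|r| * t) + 2*q*(Real.log c) ≥ 4*q := by
      have e1 : 0 ≤ t^2 - 4*q*(|r| * t) + 4*q^2*r^2 := by
        nlinarith [sq_nonneg (t - 2*q*(abs r)), sq_abs r]
      have e2 : 2*q*(2*q*r^2+2) ≤ 2*q*Real.log c :=
        mul_le_mul_of_nonneg_left hlnc (by linarith)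
      nlinarith [e1, e2, ht2]
    rw [hlogT_eq]
    have goal2 : (1/(2*q)) * Real.log p + 2 ≤ Real.log c + (1/q) * Real.log p - |r| * (2*t) := by
      rw [← sub_nonneg]
      have expand : Real.log c + (1/q) * Real.log p - |r| * (2*t) - ((1/(2*q)) * Real.log p + 2)
          = (Real.log p - 4*q*(|r| * t) + 2*q*(Real.log c) - 4*q) / (2*q) := by
        field_simp; ring
      rw [expand]
      have : (0:ℝ) ≤ Real.log p - 4*q*(|r| * t) + 2*q*(Real.log c) - 4*q := by linarith
      positivity
    linarith
  have hlogT2 : 2 ≤ Real.log T := by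
    have : (0:ℝ) ≤ 1/(2*q) * Real.log p := by positivity
    linarith
  have hlogT0 : 0 < Real.log T := by linarith
  refine ⟨hlogT2, ?_⟩
  -- T^q formula
  have hTq : T ^ q = c ^ q * p * Real.log p ^ (q*r) := by
    rw [hT_def, Real.mul_rpow (by positivity) (by positivity),
      Real.mul_rpow (by positivity) (by positivity)]
    rw [← Real.rpow_mul hp0.le, one_div, inv_mul_cancel₀ hq.ne', Real.rpow_one,
      ← Real.rpow_mul hlogp0.le, mul_comm r q]
  have hlogp_cancel : Real.log p ^ (q*r) * Real.log p ^ (-(q*r)) = 1 := by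
    rw [← Real.rpow_add hlogp0]; simp
  -- main condition (**)
  have hW : ∃ W : ℝ, 0 < W ∧ c₂ * W ≤ C₁ * c ^ q ∧
      W⁻¹ * Real.log p ^ (-(q*r)) ≤ Real.log T ^ (-(q*r)) := by
    rcases le_or_gt (q*r) 0 with hqr | hqr
    · refine ⟨(2*q) ^ (-(q*r)), Real.rpow_pos_of_pos (by linarith) _, ?_, ?_⟩
      · have hcW := hcW1
        have hX0 : 0 ≤ c₂ * (2*q) ^ (-(q*r)) / C₁ := by positivity
        have h1 : c₂ * (2*q) ^ (-(q*r)) / C₁ + 1 ≤ c ^ q := by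
          calc c₂ * (2*q) ^ (-(q*r)) / C₁ + 1
              = ((c₂ * (2*q) ^ (-(q*r)) / C₁ + 1) ^ (1/q)) ^ q := by
                rw [← Real.rpow_mul (by linarith), one_div, inv_mul_cancel₀ hq.ne',
                  Real.rpow_one]
            _ ≤ c ^ q := Real.rpow_le_rpow (by positivity) hcW hq.le
        have hd : c₂ * (2*q) ^ (-(q*r)) / C₁ ≤ c ^ q := by linarith
        calc c₂ * (2*q) ^ (-(q*r)) = C₁ * (c₂ * (2*q) ^ (-(q*r)) / C₁) := by field_simp
          _ ≤ C₁ * c ^ q := mul_le_mul_of_nonneg_left hd hC₁.le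
      · have h3 : (1/(2*q)) * Real.log p ≤ Real.log T := by linarith
        have h4 : ((1/(2*q)) * Real.log p) ^ (-(q*r)) ≤ Real.log T ^ (-(q*r)) :=
          Real.rpow_le_rpow (by positivity) h3 (by linarith)
        have h5 : ((1/(2*q)) * Real.log p) ^ (-(q*r))
            = ((2*q) ^ (-(q*r)))⁻¹ * Real.log p ^ (-(q*r)) := by
          rw [Real.mul_rpow (by positivity) (by positivity), one_div,
            Real.inv_rpow (by positivity)]
        rw [← h5]; exact h4
    · have haz : a = q*r := by rw [ha_def]; exact max_eq_left hqr.le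
      have ha0' : 0 < a := by rw [haz]; exact hqr
      have hβ0 : 0 < β := by rw [hβ_def]; positivity
      have hΛ₀0 : 0 < Λ₀ := by rw [hΛ₀_def]; positivity
      set Λ : ℝ := Real.log c / Real.log 4 + 1/q + |r| with hΛ_def
      have hΛ0 : 0 < Λ := by rw [hΛ_def]; positivity
      have hlogT_ub : Real.log T ≤ Λ * Real.log p := by
        rw [hlogT_eq, hΛ_def]
        have e1 : Real.log c ≤ Real.log c / Real.log 4 * Real.log p := by
          rw [div_mul_eq_mul_div, le_div_iff₀ (by linarith)]
          have := Real.log_le_log (by norm_num : (0:ℝ) < 4) hp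
          nlinarith
        have e2 : r * Real.log (Real.log p) ≤ |r| * Real.log p := by
          have l1 : Real.log (Real.log p) ≤ Real.log p := by
            have := Real.log_le_sub_one_of_pos hlogp0; linarith
          have l2 : 0 ≤ Real.log (Real.log p) := Real.log_nonneg hlogp.le
          calc r * Real.log (Real.log p) ≤ |r| * Real.log (Real.log p) :=
                mul_le_mul_of_nonneg_right (le_abs_self r) l2
            _ ≤ |r| * Real.log p := mul_le_mul_of_nonneg_left l1 (abs_nonneg r)
        nlinarith [hlogp0]
      -- Λ ≤ c^β * Λ₀
      have hcβ1 : 1 ≤ c ^ β := Real.one_le_rpow hc1 hβ0.le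
      have hlogc_le : Real.log c ≤ c ^ β / β := by
        have l1 : Real.log (c ^ β) = β * Real.log c := Real.log_rpow hc0 β
        have l2 : Real.log (c ^ β) ≤ c ^ β - 1 :=
          Real.log_le_sub_one_of_pos (Real.rpow_pos_of_pos hc0 β)
        rw [l1] at l2
        rw [le_div_iff₀ hβ0]
        have h0 : 0 < c ^ β := Real.rpow_pos_of_pos hc0 β
        linarith [l2]
      have hΛ_le : Λ ≤ c ^ β * Λ₀ := by
        rw [hΛ_def, hΛ₀_def]
        have e1 : Real.log c / Real.log 4 ≤ c ^ β * (1/(β * Real.log 4)) := by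
          rw [div_le_iff₀ (by linarith)]
          have expand : c ^ β * (1/(β * Real.log 4)) * Real.log 4 = c ^ β / β := by
            field_simp
          rw [expand]; exact hlogc_le
        have e2 : 1/q ≤ c ^ β * (1/q) := le_mul_of_one_le_left (by positivity) hcβ1
        have e3 : |r| ≤ c ^ β * |r| := le_mul_of_one_le_left (abs_nonneg r) hcβ1
        calc Real.log c / Real.log 4 + 1/q + |r|
            ≤ c ^ β * (1/(β * Real.log 4)) + c ^ β * (1/q) + c ^ β * |r| := by linarith
          _ = c ^ β * (1/(β * Real.log 4) + 1/q + |r|) := by ring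
      have hΛa : Λ ^ a ≤ c ^ (q/2) * Λ₀ ^ a := by
        calc Λ ^ a ≤ (c ^ β * Λ₀) ^ a := Real.rpow_le_rpow hΛ0.le hΛ_le ha0
          _ = (c ^ β) ^ a * Λ₀ ^ a := Real.mul_rpow (by positivity) hΛ₀0.le
          _ = c ^ (q/2) * Λ₀ ^ a := by
              rw [← Real.rpow_mul hc0.le]
              congr 2
              rw [hβ_def]
              field_simp [ha0'.ne']
      have hcW := hcW2
      have hXq : c₂ * Λ₀ ^ a / C₁ + 1 ≤ c ^ (q/2) := by
        calc c₂ * Λ₀ ^ a / C₁ + 1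
            = ((c₂ * Λ₀ ^ a / C₁ + 1) ^ (2/q)) ^ (q/2) := by
              rw [← Real.rpow_mul (by positivity)]
              have : 2/q * (q/2) = 1 := by field_simp
              rw [this, Real.rpow_one]
          _ ≤ c ^ (q/2) := Real.rpow_le_rpow (by positivity) hcW (by positivity)
      refine ⟨Λ ^ (q*r), Real.rpow_pos_of_pos hΛ0 _, ?_, ?_⟩
      · have h1 : c₂ * Λ₀ ^ a ≤ C₁ * c ^ (q/2) := by
          have hd : c₂ * Λ₀ ^ a / C₁ ≤ c ^ (q/2) := by linarith
          calc c₂ * Λ₀ ^ a = C₁ * (c₂ * Λ₀ ^ a / C₁) := by field_simp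
            _ ≤ C₁ * c ^ (q/2) := mul_le_mul_of_nonneg_left hd hC₁.le
        have hcq : c ^ q = c ^ (q/2) * c ^ (q/2) := by
          rw [← Real.rpow_add hc0]; congr 1; ring
        have hca : 0 < c ^ (q/2) := Real.rpow_pos_of_pos hc0 _
        have hΛa' : Λ ^ (q*r) ≤ c ^ (q/2) * Λ₀ ^ a := by rw [← haz]; exact hΛa
        calc c₂ * Λ ^ (q*r) ≤ c₂ * (c ^ (q/2) * Λ₀ ^ a) :=
              mul_le_mul_of_nonneg_left hΛa' hc₂0.le
          _ = (c₂ * Λ₀ ^ a) * c ^ (q/2) := by ring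
          _ ≤ (C₁ * c ^ (q/2)) * c ^ (q/2) := mul_le_mul_of_nonneg_right h1 hca.le
          _ = C₁ * c ^ q := by rw [hcq]; ring
      · have h4 : (Λ * Real.log p) ^ (-(q*r)) ≤ Real.log T ^ (-(q*r)) :=
          Real.rpow_le_rpow_of_nonpos hlogT0 hlogT_ub (by linarith)
        have h5 : (Λ * Real.log p) ^ (-(q*r))
            = (Λ ^ (q*r))⁻¹ * Real.log p ^ (-(q*r)) := by
          rw [Real.mul_rpow hΛ0.le hlogp0.le, Real.rpow_neg hΛ0.le]
        rw [← h5]; exact h4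
  obtain ⟨W, hW0, hW1, hW2⟩ := hW
  have hstar : c₂ * p ≤ C₁ * T ^ q * Real.log T ^ (-(q*r)) := by
    have h6 : C₁ * T ^ q * (W⁻¹ * Real.log p ^ (-(q*r))) ≤
        C₁ * T ^ q * Real.log T ^ (-(q*r)) := by
      apply mul_le_mul_of_nonneg_left hW2
      positivity
    have h7 : C₁ * T ^ q * (W⁻¹ * Real.log p ^ (-(q*r)))
        = (C₁ * c ^ q * W⁻¹) * p * (Real.log p ^ (q*r) * Real.log p ^ (-(q*r))) := by
      rw [hTq]; ring
    rw [h7, hlogp_cancel, mul_one] at h6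
    have h8 : c₂ * p ≤ C₁ * c ^ q * W⁻¹ * p := by
      apply mul_le_mul_of_nonneg_right _ hp0.le
      rw [← mul_le_mul_iff_of_pos_right hW0]
      have : C₁ * c ^ q * W⁻¹ * W = C₁ * c ^ q := by field_simp
      rw [this]; exact hW1
    linarith
  -- per-k conclusion
  intro k
  have h2k1 : (1:ℝ) ≤ 2 ^ k := one_le_pow₀ (by norm_num)
  have h2k0 : (0:ℝ) < 2 ^ k := by positivity
  have hTkq : (T * 2 ^ k) ^ q = T ^ q * (2:ℝ) ^ ((k:ℝ) * q) := by
    rw [Real.mul_rpow hT0.le h2k0.le, ← Real.rpow_natCast (2:ℝ) k,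
      ← Real.rpow_mul (by norm_num : (0:ℝ) ≤ 2)]
  have hlogTk : Real.log (T * 2 ^ k) = Real.log T + k * Real.log 2 := by
    rw [Real.log_mul hT0.ne' h2k0.ne', Real.log_pow]
  have hlogTk0 : 0 < Real.log (T * 2 ^ k) := by
    rw [hlogTk]; have : (0:ℝ) ≤ k * Real.log 2 := by positivity
    linarith
  have hshell : ((k:ℝ)+1) ^ (-a) * Real.log T ^ (-(q*r)) ≤
      Real.log (T * 2 ^ k) ^ (-(q*r)) := by
    rcases le_or_gt (q*r) 0 with hqr | hqr
    · have haz : a = 0 := by rw [ha_def]; exact max_eq_right hqr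
      rw [haz, neg_zero, Real.rpow_zero, one_mul]
      apply Real.rpow_le_rpow hlogT0.le _ (by linarith)
      rw [hlogTk]
      have : (0:ℝ) ≤ k * Real.log 2 := by positivity
      linarith
    · have haz : a = q*r := by rw [ha_def]; exact max_eq_left hqr.le
      have hub : Real.log (T * 2 ^ k) ≤ ((k:ℝ)+1) * Real.log T := by
        rw [hlogTk]
        have : (k:ℝ) * Real.log 2 ≤ (k:ℝ) * Real.log T := by
          apply mul_le_mul_of_nonneg_left _ (Nat.cast_nonneg k)
          linarith
        linarith
      have h4 : (((k:ℝ)+1) * Real.log T) ^ (-(q*r)) ≤ Real.log (T * 2 ^ k) ^ (-(q*r)) :=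
        Real.rpow_le_rpow_of_nonpos hlogTk0 hub (by linarith)
      have h5 : (((k:ℝ)+1) * Real.log T) ^ (-(q*r))
          = ((k:ℝ)+1) ^ (-(q*r)) * Real.log T ^ (-(q*r)) :=
        Real.mul_rpow (by positivity) hlogT0.le
      rw [haz]
      rw [← h5]; exact h4
  have hgeom : ((k:ℝ)+1) / S ≤ (2:ℝ) ^ ((k:ℝ)*q) * ((k:ℝ)+1) ^ (-a) := by
    have h1 := hSbound k
    have h2 : ((k:ℝ)+1) ^ m * ((k:ℝ)+1) ^ (-a) = (k:ℝ)+1 := by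
      rw [← Real.rpow_add (by positivity)]
      have : m + -a = 1 := by rw [hm_def]; ring
      rw [this, Real.rpow_one]
    have hka : (0:ℝ) ≤ ((k:ℝ)+1) ^ (-a) := by positivity
    calc ((k:ℝ)+1) / S = ((k:ℝ)+1) ^ m * ((k:ℝ)+1) ^ (-a) / S := by rw [h2]
      _ ≤ (S * (2:ℝ) ^ ((k:ℝ)*q)) * ((k:ℝ)+1) ^ (-a) / S := by
          gcongr
      _ = (2:ℝ) ^ ((k:ℝ)*q) * ((k:ℝ)+1) ^ (-a) := by field_simp
  calc ((k:ℝ) + ((k:ℝ)+1)*p) * Real.log 2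
      ≤ (((k:ℝ)+1) * (2*p)) * Real.log 2 := by
        have hk0 : (0:ℝ) ≤ k := Nat.cast_nonneg k
        have e0 : (k:ℝ)+1 ≤ ((k:ℝ)+1)*p := le_mul_of_one_le_right (by positivity) hp1
        have e : (k:ℝ) + ((k:ℝ)+1)*p ≤ ((k:ℝ)+1)*(2*p) := by linarith
        exact mul_le_mul_of_nonneg_right e hlog2.le
    _ = ((k:ℝ)+1)/S * (c₂ * p) := by rw [hc₂_def]; field_simp
    _ ≤ ((2:ℝ) ^ ((k:ℝ)*q) * ((k:ℝ)+1) ^ (-a)) * (c₂ * p) :=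
        mul_le_mul_of_nonneg_right hgeom (by positivity)
    _ ≤ ((2:ℝ) ^ ((k:ℝ)*q) * ((k:ℝ)+1) ^ (-a)) * (C₁ * T ^ q * Real.log T ^ (-(q*r))) :=
        mul_le_mul_of_nonneg_left hstar (by positivity)
    _ = C₁ * (T ^ q * (2:ℝ) ^ ((k:ℝ)*q)) * (((k:ℝ)+1) ^ (-a) * Real.log T ^ (-(q*r))) := by
        ring
    _ ≤ C₁ * (T ^ q * (2:ℝ) ^ ((k:ℝ)*q)) * Real.log (T * 2 ^ k) ^ (-(q*r)) := by
        apply mul_le_mul_of_nonneg_left hshell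
        positivity
    _ = C₁ * (T * 2 ^ k) ^ q * Real.log (T * 2 ^ k) ^ (-(q*r)) := by rw [hTkq]

end AuxStmt11

/-- If a random variable `ξ` satisfies the two-sided tail estimate
`max(P(ξ ≥ x), P(ξ ≤ -x)) ≤ exp(-C₁ x^q (ln x)^{-qr})` for all `x > e`, then there is a
constant `C₃ = C₃(C₁,q,r)` such that `|ξ|_p ≤ C₃ p^{1/q} (ln p)^r` for all `p ≥ 4`. -/
theorem stmt_11
    {Ω : Type*} [mΩ : MeasurableSpace Ω] (μ : Measure Ω) [IsProbabilityMeasure μ]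
    (ξ : Ω → ℝ) (hξ : Measurable ξ)
    (C₁ q r : ℝ) (hC₁ : 0 < C₁) (hq : 0 < q)
    (htail : ∀ x : ℝ, Real.exp 1 < x →
      max (μ {ω | x ≤ ξ ω}) (μ {ω | ξ ω ≤ -x}) ≤
        ENNReal.ofReal (Real.exp (-(C₁ * x ^ q * (Real.log x) ^ (-(q * r)))))) :
    ∃ C₃ : ℝ, 0 < C₃ ∧ ∀ p : ℝ, 4 ≤ p →
      Lnorm μ p ξ ≤ C₃ * p ^ (1 / q) * (Real.log p) ^ r := by
  obtain ⟨c, hc1, hkey⟩ := key_choice C₁ q r hC₁ hq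
  refine ⟨2*c, by linarith, ?_⟩
  intro p hp
  have hp0 : (0:ℝ) < p := by linarith
  have hp4 : (4:ℝ) ≤ p := hp
  have hlogp : 1 < Real.log p := lt_of_lt_of_le log4_gt_one (Real.log_le_log (by norm_num) hp)
  have hlogp0 : 0 < Real.log p := by linarith
  obtain ⟨hlogT2, hE⟩ := hkey p hp
  set T : ℝ := c * p ^ (1/q) * Real.log p ^ r with hT_def
  have hc0 : (0:ℝ) < c := by linarith
  have hT0 : 0 < T := by rw [hT_def]; positivity
  have hTe : Real.exp 1 < T := by
    calc Real.exp 1 < Real.exp 2 := Real.exp_lt_exp.mpr (by norm_num)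
      _ ≤ Real.exp (Real.log T) := Real.exp_le_exp.mpr hlogT2
      _ = T := Real.exp_log hT0
  have h2k1 : ∀ k:ℕ, (1:ℝ) ≤ 2^k := fun k => one_le_pow₀ (by norm_num)
  have h2k0 : ∀ k:ℕ, (0:ℝ) < 2^k := fun k => by positivity
  -- the tail bound for |ξ|
  have htail2 : ∀ k:ℕ, μ {ω | T * 2^k ≤ |ξ ω|} ≤
      2 * ENNReal.ofReal (Real.exp
        (-(C₁ * (T*2^k)^q * (Real.log (T*2^k))^(-(q*r))))) := by
    intro k
    have hx : Real.exp 1 < T * 2^k :=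
      lt_of_lt_of_le hTe (le_mul_of_one_le_right hT0.le (h2k1 k))
    have hsub : {ω | T * 2^k ≤ |ξ ω|} ⊆ {ω | T*2^k ≤ ξ ω} ∪ {ω | ξ ω ≤ -(T*2^k)} := by
      intro ω hω
      have hω' : T * 2^k ≤ |ξ ω| := hω
      rcases le_abs.mp hω' with h | h
      · exact Or.inl h
      · refine Or.inr ?_
        show ξ ω ≤ -(T * 2^k)
        linarith [h]
    calc μ {ω | T * 2^k ≤ |ξ ω|} ≤ μ ({ω | T*2^k ≤ ξ ω} ∪ {ω | ξ ω ≤ -(T*2^k)}) :=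
          measure_mono hsub
      _ ≤ μ {ω | T*2^k ≤ ξ ω} + μ {ω | ξ ω ≤ -(T*2^k)} := measure_union_le _ _
      _ ≤ ENNReal.ofReal (Real.exp (-(C₁ * (T*2^k)^q * (Real.log (T*2^k))^(-(q*r)))))
          + ENNReal.ofReal (Real.exp (-(C₁ * (T*2^k)^q * (Real.log (T*2^k))^(-(q*r))))) :=
          add_le_add (le_trans (le_max_left _ _) (htail _ hx))
            (le_trans (le_max_right _ _) (htail _ hx))
      _ = 2 * ENNReal.ofReal (Real.exp (-(C₁ * (T*2^k)^q * (Real.log (T*2^k))^(-(q*r))))) :=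
          (two_mul _).symm
  -- shells
  set Sh : ℕ → Set Ω := fun k => {ω | T * 2^k ≤ |ξ ω| ∧ |ξ ω| < T * 2^(k+1)} with hSh_def
  have hShm : ∀ k, MeasurableSet (Sh k) := by
    intro k
    have h1 : Measurable fun ω => |ξ ω| := hξ.abs
    exact h1 measurableSet_Ico
  -- pointwise bound
  have hpt : ∀ ω, ENNReal.ofReal (|ξ ω| ^ p) ≤
      ENNReal.ofReal (T ^ p) + ∑' k, Set.indicator (Sh k)
        (fun _ => ENNReal.ofReal ((T * 2^(k+1)) ^ p)) ω := by
    intro ω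
    rcases le_or_gt (|ξ ω|) T with h | h
    · exact le_trans (ENNReal.ofReal_le_ofReal
        (Real.rpow_le_rpow (abs_nonneg _) h (by linarith))) le_self_add
    · have hex : ∃ n:ℕ, |ξ ω| < T * 2^(n+1) := by
        obtain ⟨n, hn⟩ := pow_unbounded_of_one_lt (|ξ ω| / T) (by norm_num : (1:ℝ) < 2)
        rw [div_lt_iff₀ hT0] at hn
        refine ⟨n, ?_⟩
        calc |ξ ω| < 2^n * T := hn
          _ = T * 2^n := by ring
          _ ≤ T * 2^(n+1) := by
              have : (2:ℝ)^n ≤ 2^(n+1) := by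
                apply pow_le_pow_right₀ (by norm_num) (by omega)
              nlinarith [hT0]
      have hk1 : |ξ ω| < T * 2^(Nat.find hex + 1) := Nat.find_spec hex
      have hk0 : T * 2^(Nat.find hex) ≤ |ξ ω| := by
        rcases Nat.eq_zero_or_pos (Nat.find hex) with h0 | h0
        · rw [h0]; simpa using h.le
        · obtain ⟨j, hj⟩ := Nat.exists_eq_succ_of_ne_zero h0.ne'
          have hmin := Nat.find_min hex (by omega : j < Nat.find hex)
          push_neg at hmin
          rw [hj]; exact hmin
      have hmem : ω ∈ Sh (Nat.find hex) := ⟨hk0, hk1⟩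
      calc ENNReal.ofReal (|ξ ω| ^ p)
          ≤ ENNReal.ofReal ((T * 2^(Nat.find hex + 1)) ^ p) :=
            ENNReal.ofReal_le_ofReal (Real.rpow_le_rpow (abs_nonneg _) hk1.le (by linarith))
        _ = Set.indicator (Sh (Nat.find hex))
            (fun _ => ENNReal.ofReal ((T * 2^(Nat.find hex + 1)) ^ p)) ω := by
            rw [Set.indicator_of_mem hmem]
        _ ≤ ∑' k, Set.indicator (Sh k)
            (fun _ => ENNReal.ofReal ((T * 2^(k+1)) ^ p)) ω := ENNReal.le_tsum _
        _ ≤ _ := le_add_self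
  -- per-term bound
  have hterm : ∀ k : ℕ, ENNReal.ofReal ((T * 2^(k+1)) ^ p) * μ (Sh k) ≤
      (2 * ENNReal.ofReal (T ^ p)) * (2⁻¹ : ℝ≥0∞)^k := by
    intro k
    have hμ : μ (Sh k) ≤ 2 * ENNReal.ofReal (Real.exp
        (-(C₁ * (T*2^k)^q * (Real.log (T*2^k))^(-(q*r))))) :=
      le_trans (measure_mono (fun ω hω => hω.1)) (htail2 k)
    have hreal : (T * 2^(k+1)) ^ p * Real.exp
        (-(C₁ * (T*2^k)^q * (Real.log (T*2^k))^(-(q*r)))) ≤ T ^ p * (2:ℝ)^(-(k:ℝ)) := by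
      have e1 : Real.exp (-(C₁ * (T*2^k)^q * (Real.log (T*2^k))^(-(q*r)))) ≤
          Real.exp (-(((k:ℝ) + ((k:ℝ)+1)*p) * Real.log 2)) :=
        Real.exp_le_exp.mpr (neg_le_neg (hE k))
      have e2 : Real.exp (-(((k:ℝ) + ((k:ℝ)+1)*p) * Real.log 2)) =
          (2:ℝ) ^ (-((k:ℝ) + ((k:ℝ)+1)*p)) := by
        rw [Real.rpow_def_of_pos (by norm_num : (0:ℝ) < 2)]
        congr 1; ring
      have e3 : (T * 2^(k+1)) ^ p = T ^ p * (2:ℝ) ^ (((k:ℝ)+1)*p) := by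
        rw [Real.mul_rpow hT0.le (h2k0 (k+1)).le, ← Real.rpow_natCast (2:ℝ) (k+1),
          ← Real.rpow_mul (by norm_num : (0:ℝ) ≤ 2)]
        push_cast
        ring_nf
      have e4 : (2:ℝ) ^ (((k:ℝ)+1)*p) * (2:ℝ) ^ (-((k:ℝ) + ((k:ℝ)+1)*p)) =
          (2:ℝ) ^ (-(k:ℝ)) := by
        rw [← Real.rpow_add (by norm_num : (0:ℝ) < 2)]
        congr 1; ring
      calc (T * 2^(k+1)) ^ p * Real.exp (-(C₁ * (T*2^k)^q * (Real.log (T*2^k))^(-(q*r))))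
          ≤ (T * 2^(k+1)) ^ p * (2:ℝ) ^ (-((k:ℝ) + ((k:ℝ)+1)*p)) := by
            rw [← e2]
            exact mul_le_mul_of_nonneg_left e1 (by positivity)
        _ = T ^ p * ((2:ℝ) ^ (((k:ℝ)+1)*p) * (2:ℝ) ^ (-((k:ℝ) + ((k:ℝ)+1)*p))) := by
            rw [e3]; ring
        _ = T ^ p * (2:ℝ) ^ (-(k:ℝ)) := by rw [e4]
    have h2inv : ENNReal.ofReal ((2:ℝ)^(-(k:ℝ))) = (2⁻¹ : ℝ≥0∞)^k := by
      rw [Real.rpow_neg (by norm_num : (0:ℝ) ≤ 2), Real.rpow_natCast, ← inv_pow,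
        ENNReal.ofReal_pow (by norm_num : (0:ℝ) ≤ 2⁻¹)]
      congr 1
      rw [ENNReal.ofReal_inv_of_pos (by norm_num : (0:ℝ) < 2)]
      norm_num
    calc ENNReal.ofReal ((T * 2^(k+1)) ^ p) * μ (Sh k)
        ≤ ENNReal.ofReal ((T * 2^(k+1)) ^ p) * (2 * ENNReal.ofReal (Real.exp
            (-(C₁ * (T*2^k)^q * (Real.log (T*2^k))^(-(q*r)))))) :=
          mul_le_mul_of_nonneg_left hμ (by positivity)
      _ = 2 * ENNReal.ofReal ((T * 2^(k+1)) ^ p * Real.exp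
            (-(C₁ * (T*2^k)^q * (Real.log (T*2^k))^(-(q*r))))) := by
          rw [ENNReal.ofReal_mul (by positivity)]; ring
      _ ≤ 2 * ENNReal.ofReal (T ^ p * (2:ℝ)^(-(k:ℝ))) := by
          exact mul_le_mul_of_nonneg_left (ENNReal.ofReal_le_ofReal hreal) (by positivity)
      _ = (2 * ENNReal.ofReal (T ^ p)) * (2⁻¹ : ℝ≥0∞)^k := by
          rw [ENNReal.ofReal_mul (by positivity), h2inv]; ring
  -- integral bound
  have hint : ∫⁻ ω, ENNReal.ofReal (|ξ ω| ^ p) ∂μ ≤ ENNReal.ofReal ((2*T)^p) := by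
    have sum_eq : ∫⁻ ω, (ENNReal.ofReal (T ^ p) + ∑' k, Set.indicator (Sh k)
        (fun _ => ENNReal.ofReal ((T * 2^(k+1)) ^ p)) ω) ∂μ
        = ENNReal.ofReal (T^p) + ∑' k, ENNReal.ofReal ((T * 2^(k+1)) ^ p) * μ (Sh k) := by
      rw [lintegral_add_left measurable_const, lintegral_const, measure_univ, mul_one,
        lintegral_tsum (fun k => ((measurable_const).indicator (hShm k)).aemeasurable)]
      congr 1
      exact tsum_congr fun k => lintegral_indicator_const (hShm k) _
    have five : ENNReal.ofReal (T^p) + (2 * ENNReal.ofReal (T ^ p)) * 2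
        ≤ ENNReal.ofReal ((2*T)^p) := by
      have h5 : ENNReal.ofReal (T^p) + (2 * ENNReal.ofReal (T ^ p)) * 2
          = ENNReal.ofReal (5 * T^p) := by
        rw [ENNReal.ofReal_mul (by norm_num), ENNReal.ofReal_ofNat]
        ring
      rw [h5]
      apply ENNReal.ofReal_le_ofReal
      have h16 : (16:ℝ) ≤ (2:ℝ)^p := by
        have : (2:ℝ)^(4:ℝ) ≤ (2:ℝ)^p := Real.rpow_le_rpow_of_exponent_le (by norm_num) hp
        have h24 : (2:ℝ)^(4:ℝ) = 16 := by
          rw [show (4:ℝ) = ((4:ℕ):ℝ) by norm_num, Real.rpow_natCast]; norm_num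
        linarith
      calc 5 * T^p ≤ 16 * T^p := by nlinarith [Real.rpow_nonneg hT0.le p]
        _ ≤ (2:ℝ)^p * T^p := mul_le_mul_of_nonneg_right h16 (Real.rpow_nonneg hT0.le p)
        _ = (2*T)^p := (Real.mul_rpow (by norm_num) hT0.le).symm
    calc ∫⁻ ω, ENNReal.ofReal (|ξ ω| ^ p) ∂μ
        ≤ ∫⁻ ω, (ENNReal.ofReal (T ^ p) + ∑' k, Set.indicator (Sh k)
            (fun _ => ENNReal.ofReal ((T * 2^(k+1)) ^ p)) ω) ∂μ := lintegral_mono hpt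
      _ = ENNReal.ofReal (T^p) + ∑' k, ENNReal.ofReal ((T * 2^(k+1)) ^ p) * μ (Sh k) :=
          sum_eq
      _ ≤ ENNReal.ofReal (T^p) + ∑' k, (2 * ENNReal.ofReal (T ^ p)) * (2⁻¹ : ℝ≥0∞)^k :=
          add_le_add (le_refl _) (ENNReal.tsum_le_tsum hterm)
      _ = ENNReal.ofReal (T^p) + (2 * ENNReal.ofReal (T ^ p)) * 2 := by
          rw [ENNReal.tsum_mul_left, ENNReal.tsum_geometric, ENNReal.one_sub_inv_two, inv_inv]
      _ ≤ ENNReal.ofReal ((2*T)^p) := five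
  -- conclude
  have hmeas : AEStronglyMeasurable (fun ω => |ξ ω| ^ p) μ :=
    (Measurable.pow hξ.abs measurable_const).aestronglyMeasurable
  have hInt_eq : ∫ ω, |ξ ω| ^ p ∂μ = (∫⁻ ω, ENNReal.ofReal (|ξ ω| ^ p) ∂μ).toReal :=
    integral_eq_lintegral_of_nonneg_ae
      (Filter.Eventually.of_forall fun ω => Real.rpow_nonneg (abs_nonneg _) p) hmeas
  have hb : ∫ ω, |ξ ω| ^ p ∂μ ≤ (2*T)^p := by
    rw [hInt_eq]
    exact ENNReal.toReal_le_of_le_ofReal (by positivity) hint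
  have hnn : 0 ≤ ∫ ω, |ξ ω| ^ p ∂μ :=
    integral_nonneg fun ω => Real.rpow_nonneg (abs_nonneg _) p
  show (∫ ω, |ξ ω| ^ p ∂μ) ^ (1/p) ≤ 2*c * p ^ (1/q) * Real.log p ^ r
  calc (∫ ω, |ξ ω| ^ p ∂μ) ^ (1/p) ≤ ((2*T)^p) ^ (1/p) :=
        Real.rpow_le_rpow hnn hb (by positivity)
    _ = 2*T := by
        rw [← Real.rpow_mul (by positivity), mul_one_div, div_self hp0.ne', Real.rpow_one]
    _ = 2*c * p ^ (1/q) * Real.log p ^ r := by rw [hT_def]; ring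
end

section
/- Let ξ be a random variable, and let C₃ > 0, q > 0 and r be constants such that |ξ|_p ≤ C₃ · p^{1/q} · (ln p)^r for all p ≥ 4. Then there exist constants C > 0 and x₀ > e (depending only on C₃, q, r) such that for all x > x₀: max(P(ξ ≥ x), P(ξ ≤ −x)) ≤ exp(−C x^q (ln x)^{−q r}). -/
open MeasureTheory ProbabilityTheory Real Filter Finset
open scoped ENNReal

/-- If `|ξ|_p ≤ C₃ p^{1/q} (ln p)^r` for all `p ≥ 4` (in the strong
sense that the `L^p` quasinorm is finite and so bounded), then there are constants
`C > 0` and `x₀ > e` such that for all `x > x₀`,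
`max(P(ξ ≥ x), P(ξ ≤ -x)) ≤ exp(-C x^q (ln x)^{-qr})`. -/
theorem stmt_12
    {Ω : Type*} [mΩ : MeasurableSpace Ω] (μ : Measure Ω) [IsProbabilityMeasure μ]
    (ξ : Ω → ℝ) (hξ : Measurable ξ)
    (C₃ q r : ℝ) (hC₃ : 0 < C₃) (hq : 0 < q)
    (hmom : ∀ p : ℝ, 4 ≤ p →
      eLpNorm ξ (ENNReal.ofReal p) μ ≤
        ENNReal.ofReal (C₃ * p ^ (1 / q) * (Real.log p) ^ r)) :
    ∃ C : ℝ, 0 < C ∧ ∃ x₀ : ℝ, Real.exp 1 < x₀ ∧ ∀ x : ℝ, x₀ < x →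
      max (μ {ω | x ≤ ξ ω}) (μ {ω | ξ ω ≤ -x}) ≤
        ENNReal.ofReal (Real.exp (-(C * x ^ q * (Real.log x) ^ (-(q * r))))) := by
  set A : ℝ := max ((q / 2) ^ r) ((2 * q) ^ r) with hAdef
  have hA0 : 0 < A := lt_max_of_lt_left (Real.rpow_pos_of_pos (by positivity) r)
  set ε : ℝ := (Real.exp 1 * C₃ * A)⁻¹ ^ q with hεdef
  have heCA : (0 : ℝ) < Real.exp 1 * C₃ * A := by positivity
  have hε0 : 0 < ε := Real.rpow_pos_of_pos (by positivity) q
  have hεq : ε ^ (1 / q) = (Real.exp 1 * C₃ * A)⁻¹ := by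
    rw [hεdef, ← Real.rpow_mul (le_of_lt (inv_pos.mpr heCA)), mul_one_div,
      div_self hq.ne', Real.rpow_one]
  -- eventual conditions
  have hlogT : Tendsto Real.log atTop atTop := Real.tendsto_log_atTop
  have t1 : Tendsto (fun x : ℝ => Real.log ε * (Real.log x)⁻¹) atTop (nhds 0) := by
    simpa using (hlogT.inv_tendsto_atTop).const_mul (Real.log ε)
  have t2 : Tendsto (fun x : ℝ => q * r * (Real.log (Real.log x) / Real.log x))
      atTop (nhds 0) := by
    have h := (Real.isLittleO_log_id_atTop.tendsto_div_nhds_zero).comp hlogT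
    simp only [Function.comp, id] at h
    simpa using h.const_mul (q * r)
  have t3 : Tendsto (fun x : ℝ => Real.log ε * (Real.log x)⁻¹ -
      q * r * (Real.log (Real.log x) / Real.log x)) atTop (nhds 0) := by
    simpa using t1.sub t2
  have hev : ∀ᶠ x : ℝ in atTop, Real.exp 1 < x ∧
      4 ≤ ε * x ^ q * Real.log x ^ (-(q * r)) ∧
      (q / 2) * Real.log x ≤ Real.log (ε * x ^ q * Real.log x ^ (-(q * r))) ∧
      Real.log (ε * x ^ q * Real.log x ^ (-(q * r))) ≤ 2 * q * Real.log x := by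
    have h1 : ∀ᶠ x : ℝ in atTop, Real.exp 1 < x := eventually_gt_atTop _
    have h2 : ∀ᶠ x : ℝ in atTop, max 1 (2 * Real.log 4 / q) < Real.log x :=
      hlogT.eventually (eventually_gt_atTop _)
    have h3 : ∀ᶠ x : ℝ in atTop, |Real.log ε * (Real.log x)⁻¹ -
        q * r * (Real.log (Real.log x) / Real.log x)| < q / 2 := by
      have hmem : Set.Ioo (-(q / 2)) (q / 2) ∈ nhds (0 : ℝ) :=
        Ioo_mem_nhds (by linarith) (by linarith)
      filter_upwards [t3.eventually hmem] with x hx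
      rw [abs_lt]; exact ⟨hx.1, hx.2⟩
    filter_upwards [h1, h2, h3] with x hx1 hx2 hx3
    have hx0 : (0 : ℝ) < x := lt_trans (Real.exp_pos 1) hx1
    have hlx1 : (1 : ℝ) < Real.log x := lt_of_le_of_lt (le_max_left _ _) hx2
    have hlx0 : (0 : ℝ) < Real.log x := by linarith
    have hlx4 : 2 * Real.log 4 / q < Real.log x := lt_of_le_of_lt (le_max_right _ _) hx2
    have hPpos : 0 < ε * x ^ q * Real.log x ^ (-(q * r)) := by positivity
    have hlogP : Real.log (ε * x ^ q * Real.log x ^ (-(q * r))) =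
        Real.log ε + q * Real.log x - q * r * Real.log (Real.log x) := by
      rw [Real.log_mul (by positivity) (by positivity),
        Real.log_mul hε0.ne' (by positivity), Real.log_rpow hx0, Real.log_rpow hlx0]
      ring
    have hb := abs_lt.mp hx3
    have e1 : Real.log x * (Real.log ε * (Real.log x)⁻¹ -
        q * r * (Real.log (Real.log x) / Real.log x)) =
        Real.log ε - q * r * Real.log (Real.log x) := by
      field_simp
    have hu : Real.log ε - q * r * Real.log (Real.log x) < Real.log x * (q / 2) := by
      rw [← e1]; exact mul_lt_mul_of_pos_left hb.2 hlx0
    have hl : Real.log x * (-(q / 2)) < Real.log ε - q * r * Real.log (Real.log x) := by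
      rw [← e1]; exact mul_lt_mul_of_pos_left hb.1 hlx0
    have hlow : (q / 2) * Real.log x ≤ Real.log (ε * x ^ q * Real.log x ^ (-(q * r))) := by
      rw [hlogP]; nlinarith
    have hhigh : Real.log (ε * x ^ q * Real.log x ^ (-(q * r))) ≤ 2 * q * Real.log x := by
      rw [hlogP]; nlinarith
    refine ⟨hx1, ?_, hlow, hhigh⟩
    have h4 : Real.log 4 ≤ (q / 2) * Real.log x := by
      rw [div_lt_iff₀ hq] at hlx4; nlinarith
    calc (4 : ℝ) = Real.exp (Real.log 4) := (Real.exp_log (by norm_num)).symm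
      _ ≤ Real.exp (Real.log (ε * x ^ q * Real.log x ^ (-(q * r)))) :=
          Real.exp_le_exp.mpr (le_trans h4 hlow)
      _ = ε * x ^ q * Real.log x ^ (-(q * r)) := Real.exp_log hPpos
  obtain ⟨a, ha⟩ := eventually_atTop.mp hev
  refine ⟨ε, hε0, max a (Real.exp 1 + 1),
    lt_of_lt_of_le (lt_add_one _) (le_max_right _ _), fun x hx => ?_⟩
  obtain ⟨hxe, hp4, hlow, hhigh⟩ := ha x (le_of_lt (lt_of_le_of_lt (le_max_left _ _) hx))
  set p : ℝ := ε * x ^ q * Real.log x ^ (-(q * r)) with hpdef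
  have hx0 : (0 : ℝ) < x := lt_trans (Real.exp_pos 1) hxe
  have hlx1 : (1 : ℝ) < Real.log x := by
    have := Real.log_lt_log (Real.exp_pos 1) hxe
    rwa [Real.log_exp] at this
  have hlx0 : (0 : ℝ) < Real.log x := by linarith
  have hp0 : (0 : ℝ) < p := lt_of_lt_of_le (by norm_num) hp4
  have hlogp0 : 0 < Real.log p := lt_of_lt_of_le (by positivity) hlow
  -- Step A : p ^ (1/q)
  have hpq : p ^ (1 / q) = ε ^ (1 / q) * x * Real.log x ^ (-r) := by
    have hexp : -(q * r) * (1 / q) = -r := by field_simp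
    rw [hpdef, Real.mul_rpow (by positivity) (by positivity),
      Real.mul_rpow hε0.le (by positivity), ← Real.rpow_mul hx0.le,
      ← Real.rpow_mul hlx0.le, hexp, mul_one_div, div_self hq.ne', Real.rpow_one]
  -- Step B : (log p)^r ≤ A (log x)^r
  have hlogpr : Real.log p ^ r ≤ A * Real.log x ^ r := by
    have ht1 : q / 2 ≤ Real.log p / Real.log x := (le_div_iff₀ hlx0).mpr (by linarith)
    have ht2 : Real.log p / Real.log x ≤ 2 * q := (div_le_iff₀ hlx0).mpr (by linarith)
    have ht0 : 0 < Real.log p / Real.log x := div_pos hlogp0 hlx0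
    have hteq : Real.log p = (Real.log p / Real.log x) * Real.log x :=
      (div_mul_cancel₀ _ hlx0.ne').symm
    rw [hteq, Real.mul_rpow ht0.le hlx0.le]
    refine mul_le_mul_of_nonneg_right ?_ (Real.rpow_nonneg hlx0.le r)
    rcases le_or_gt 0 r with hr | hr
    · exact le_trans (Real.rpow_le_rpow ht0.le ht2 hr) (le_max_right _ _)
    · exact le_trans (Real.rpow_le_rpow_of_nonpos (by linarith) ht1 hr.le) (le_max_left _ _)
  -- Step C : moment bound
  have hM : C₃ * p ^ (1 / q) * Real.log p ^ r ≤ (Real.exp 1)⁻¹ * x := by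
    have h1 : C₃ * p ^ (1 / q) * Real.log p ^ r ≤
        C₃ * p ^ (1 / q) * (A * Real.log x ^ r) :=
      mul_le_mul_of_nonneg_left hlogpr (by positivity)
    refine h1.trans_eq ?_
    rw [hpq, hεq]
    have hcancel : Real.log x ^ (-r) * Real.log x ^ r = 1 := by
      rw [← Real.rpow_add hlx0]; simp
    have hconst : C₃ * A * (Real.exp 1 * C₃ * A)⁻¹ = (Real.exp 1)⁻¹ := by
      field_simp
    calc C₃ * ((Real.exp 1 * C₃ * A)⁻¹ * x * Real.log x ^ (-r)) * (A * Real.log x ^ r)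
        = (C₃ * A * (Real.exp 1 * C₃ * A)⁻¹) *
          (Real.log x ^ (-r) * Real.log x ^ r) * x := by ring
      _ = (Real.exp 1)⁻¹ * x := by rw [hcancel, hconst]; ring
  -- Step D : Markov inequality
  have hPenn : ENNReal.ofReal p ≠ 0 := by
    simp [ENNReal.ofReal_eq_zero, not_le, hp0]
  have hxenn : ENNReal.ofReal x ≠ 0 := by
    simp [ENNReal.ofReal_eq_zero, not_le, hx0]
  have hmark := meas_ge_le_mul_pow_eLpNorm_enorm μ hPenn ENNReal.ofReal_ne_top
    hξ.aestronglyMeasurable hxenn (fun h => absurd h ENNReal.ofReal_ne_top)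
  rw [ENNReal.toReal_ofReal hp0.le] at hmark
  have hbound : (ENNReal.ofReal x)⁻¹ ^ p * eLpNorm ξ (ENNReal.ofReal p) μ ^ p ≤
      ENNReal.ofReal (Real.exp (-(ε * x ^ q * Real.log x ^ (-(q * r))))) := by
    have hMx : (C₃ * p ^ (1 / q) * Real.log p ^ r) / x ≤ Real.exp (-1) := by
      rw [Real.exp_neg, div_le_iff₀ hx0]
      exact hM
    calc (ENNReal.ofReal x)⁻¹ ^ p * eLpNorm ξ (ENNReal.ofReal p) μ ^ p
        ≤ (ENNReal.ofReal x)⁻¹ ^ p *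
          (ENNReal.ofReal (C₃ * p ^ (1 / q) * Real.log p ^ r)) ^ p :=
          mul_le_mul_right (ENNReal.rpow_le_rpow (hmom p hp4) hp0.le) _
      _ = (ENNReal.ofReal ((C₃ * p ^ (1 / q) * Real.log p ^ r) / x)) ^ p := by
          rw [← ENNReal.mul_rpow_of_nonneg _ _ hp0.le,
            ENNReal.ofReal_div_of_pos hx0, ENNReal.div_eq_inv_mul]
      _ ≤ (ENNReal.ofReal (Real.exp (-1))) ^ p :=
          ENNReal.rpow_le_rpow (ENNReal.ofReal_le_ofReal hMx) hp0.le
      _ = ENNReal.ofReal (Real.exp (-1) ^ p) :=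
          ENNReal.ofReal_rpow_of_pos (Real.exp_pos _)
      _ = ENNReal.ofReal (Real.exp (-p)) := by
          rw [Real.exp_neg, Real.inv_rpow (Real.exp_pos 1).le, Real.exp_one_rpow,
            ← Real.exp_neg]
      _ = ENNReal.ofReal (Real.exp (-(ε * x ^ q * Real.log x ^ (-(q * r))))) := by
          rw [hpdef]
  have hsub1 : {ω | x ≤ ξ ω} ⊆ {ω | ENNReal.ofReal x ≤ (‖ξ ω‖₊ : ℝ≥0∞)} := by
    intro ω hω
    simp only [Set.mem_setOf_eq] at *
    rw [← enorm_eq_nnnorm, ← ofReal_norm, Real.norm_eq_abs]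
    exact ENNReal.ofReal_le_ofReal (le_trans hω (le_abs_self _))
  have hsub2 : {ω | ξ ω ≤ -x} ⊆ {ω | ENNReal.ofReal x ≤ (‖ξ ω‖₊ : ℝ≥0∞)} := by
    intro ω hω
    simp only [Set.mem_setOf_eq] at *
    rw [← enorm_eq_nnnorm, ← ofReal_norm, Real.norm_eq_abs]
    exact ENNReal.ofReal_le_ofReal (le_trans (by linarith [neg_abs_le (ξ ω)]) (le_refl |ξ ω|))
  exact max_le (le_trans (measure_mono hsub1) (hmark.trans hbound))
    (le_trans (measure_mono hsub2) (hmark.trans hbound))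
end

section
/- Let η be a Poisson random variable with parameter 1 and set ξ = η − 1, so that E ξ = 0. Then the p-th moment norm of ξ satisfies the asymptotic |ξ|_p ~ p/(e·ln p) as p → ∞, i.e. lim_{p→∞} |ξ|_p · (e·ln p)/p = 1. -/
open MeasureTheory ProbabilityTheory Real Filter Finset
open scoped ENNReal

noncomputable def SP (p : ℝ) : ℝ := ∑' k : ℕ, |(k : ℝ) - 1| ^ p * (Real.exp (-1) / k.factorial)

lemma aux_exp_tsum (x : ℝ) : ∑' n : ℕ, x ^ n / (n.factorial : ℝ) = Real.exp x := by
  rw [Real.exp_eq_exp_ℝ]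
  exact (NormedSpace.expSeries_div_hasSum_exp x).tsum_eq

lemma aux_master {p s x : ℝ} (hp : 0 < p) (hs : 0 < s) (hx : 0 ≤ x) :
    x ^ p ≤ Real.exp (p * Real.log (p / s) - p + s * x) := by
  rcases hx.eq_or_lt with h | h
  · rw [← h, Real.zero_rpow hp.ne']; positivity
  · rw [Real.rpow_def_of_pos h]
    apply Real.exp_le_exp.2
    have hps : 0 < p / s := by positivity
    have key := Real.log_le_sub_one_of_pos (show 0 < x / (p / s) by positivity)
    rw [Real.log_div h.ne' hps.ne'] at key
    have h2 : x / (p / s) = s * x / p := by field_simp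
    rw [h2] at key
    have := mul_le_mul_of_nonneg_left key hp.le
    calc Real.log x * p = p * (Real.log x - Real.log (p / s)) + p * Real.log (p / s) := by ring
    _ ≤ p * (s * x / p - 1) + p * Real.log (p / s) := by linarith
    _ = p * Real.log (p / s) - p + s * x := by field_simp; ring

lemma aux_summableA {p : ℝ} (hp : 0 < p) :
    Summable (fun k : ℕ => |(k : ℝ) - 1| ^ p * (Real.exp (-1) / k.factorial)) := by
  refine Summable.of_nonneg_of_le (fun k => by positivity) (fun k => ?_)
    (((Real.summable_pow_div_factorial (Real.exp 1)).mul_left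
      (Real.exp (p * Real.log p - p + 1) * Real.exp (-1))))
  ·
    have h1 : |(k : ℝ) - 1| ^ p ≤ Real.exp (p * Real.log p - p + 1) * Real.exp 1 ^ k := by
      have hb : |(k : ℝ) - 1| ≤ (k : ℝ) + 1 := by
        rw [abs_le]; constructor <;> [linarith [Nat.cast_nonneg (α := ℝ) k]; linarith]
      have h2 : |(k : ℝ) - 1| ^ p ≤ ((k : ℝ) + 1) ^ p :=
        Real.rpow_le_rpow (abs_nonneg _) hb hp.le
      have h3 := aux_master hp one_pos (show (0:ℝ) ≤ (k : ℝ) + 1 by positivity)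
      rw [div_one] at h3
      calc |(k : ℝ) - 1| ^ p ≤ ((k : ℝ) + 1) ^ p := h2
      _ ≤ Real.exp (p * Real.log p - p + 1 * ((k : ℝ) + 1)) := h3
      _ = Real.exp (p * Real.log p - p + 1) * Real.exp 1 ^ k := by
          rw [show p * Real.log p - p + 1 * ((k : ℝ) + 1)
            = (p * Real.log p - p + 1) + (k : ℝ) * 1 by ring, Real.exp_add, Real.exp_nat_mul]
    calc |(k : ℝ) - 1| ^ p * (Real.exp (-1) / k.factorial)
        ≤ (Real.exp (p * Real.log p - p + 1) * Real.exp 1 ^ k) *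
          (Real.exp (-1) / k.factorial) := by
          apply mul_le_mul_of_nonneg_right h1 (by positivity)
    _ = (Real.exp (p * Real.log p - p + 1) * Real.exp (-1)) *
          (Real.exp 1 ^ k / k.factorial) := by ring

lemma aux_summableG {p : ℝ} (hp : 0 < p) :
    Summable (fun j : ℕ => (j : ℝ) ^ p / j.factorial) := by
  refine Summable.of_nonneg_of_le (fun k => by positivity) (fun k => ?_)
    ((Real.summable_pow_div_factorial (Real.exp 1)).mul_left (Real.exp (p * Real.log p - p)))
  ·
    have h3 := aux_master hp one_pos (Nat.cast_nonneg (α := ℝ) k)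
    rw [div_one] at h3
    have h1 : (k : ℝ) ^ p ≤ Real.exp (p * Real.log p - p) * Real.exp 1 ^ k := by
      calc (k : ℝ) ^ p ≤ Real.exp (p * Real.log p - p + 1 * (k : ℝ)) := h3
      _ = Real.exp (p * Real.log p - p) * Real.exp 1 ^ k := by
          rw [show p * Real.log p - p + 1 * (k : ℝ)
            = (p * Real.log p - p) + (k : ℝ) * 1 by ring, Real.exp_add, Real.exp_nat_mul]
    calc (k : ℝ) ^ p / k.factorial
        ≤ (Real.exp (p * Real.log p - p) * Real.exp 1 ^ k) / k.factorial := by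
          apply div_le_div_of_nonneg_right h1 (by positivity)
    _ = Real.exp (p * Real.log p - p) * (Real.exp 1 ^ k / k.factorial) := by ring

lemma aux_log3 {p : ℝ} (hp : 100 ≤ p) : 3 ≤ Real.log p := by
  have hp0 : (0:ℝ) < p := by linarith
  rw [Real.le_log_iff_exp_le hp0]
  have h1 : Real.exp 3 = Real.exp 1 ^ 3 := by
    rw [Real.exp_one_pow]; norm_num
  have h2 : Real.exp 1 ^ 3 < 2.7182818286 ^ 3 :=
    pow_lt_pow_left₀ Real.exp_one_lt_d9 (Real.exp_pos 1).le (by norm_num)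
  nlinarith

lemma aux_3L {p : ℝ} (hp : 100 ≤ p) : 3 * Real.log p ≤ p := by
  have hp0 : (0:ℝ) < p := by linarith
  have h1 : Real.log p = 2 * Real.log (Real.sqrt p) := by
    rw [Real.log_sqrt hp0.le]; ring
  have h2 : Real.log (Real.sqrt p) ≤ Real.sqrt p - 1 :=
    Real.log_le_sub_one_of_pos (Real.sqrt_pos.2 hp0)
  have h3 : (6:ℝ) ≤ Real.sqrt p := by
    rw [Real.le_sqrt (by norm_num) hp0.le]; nlinarith
  nlinarith [Real.sq_sqrt hp0.le]

lemma aux_LL1 {p : ℝ} (hp : 100 ≤ p) : 1 ≤ Real.log (Real.log p) := by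
  have h1 : Real.exp 1 ≤ Real.log p := by
    have := Real.exp_one_lt_d9
    have := aux_log3 hp
    linarith
  calc (1:ℝ) = Real.log (Real.exp 1) := (Real.log_exp 1).symm
  _ ≤ Real.log (Real.log p) := Real.log_le_log (Real.exp_pos 1) h1

lemma aux_LLL {p : ℝ} (hp : 100 ≤ p) : Real.log (Real.log p) < Real.log p := by
  have h3 := aux_log3 hp
  calc Real.log (Real.log p) ≤ Real.log p - 1 :=
    Real.log_le_sub_one_of_pos (by linarith)
  _ < Real.log p := by linarith

lemma aux_integral {Ω : Type*} [mΩ : MeasurableSpace Ω] (μ : Measure Ω) [IsProbabilityMeasure μ]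
    (η : Ω → ℕ) (hη : Measurable η)
    (hpois : ∀ k : ℕ, μ {ω | η ω = k} = ENNReal.ofReal (Real.exp (-1) / k.factorial))
    {p : ℝ} (hp : 0 < p) :
    ∫ ω, |(η ω : ℝ) - 1| ^ p ∂μ = SP p := by
  set F : ℕ → ℝ := fun k => |(k : ℝ) - 1| ^ p with hF
  have hFm : Measurable F := measurable_from_top
  have hFnn : ∀ k, 0 ≤ F k := fun k => by positivity
  have hmap : ∀ k : ℕ, (μ.map η) {k} = ENNReal.ofReal (Real.exp (-1) / k.factorial) := by
    intro k
    rw [Measure.map_apply hη (measurableSet_singleton k)]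
    have : η ⁻¹' {k} = {ω | η ω = k} := rfl
    rw [this, hpois k]
  have hInt : Integrable F (μ.map η) := by
    refine ⟨hFm.aestronglyMeasurable, ?_⟩
    show (∫⁻ k, ‖F k‖₊ ∂(μ.map η)) < ⊤
    rw [lintegral_countable']
    have heq : ∀ k : ℕ, (‖F k‖₊ : ℝ≥0∞) * (μ.map η) {k}
        = ENNReal.ofReal (F k * (Real.exp (-1) / k.factorial)) := by
      intro k
      rw [hmap k, show (‖F k‖₊ : ℝ≥0∞) = ENNReal.ofReal (F k) from Real.enorm_eq_ofReal (hFnn k), ← ENNReal.ofReal_mul (hFnn k)]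
    rw [tsum_congr heq, ← ENNReal.ofReal_tsum_of_nonneg (fun k => by positivity)
      (aux_summableA hp)]
    exact ENNReal.ofReal_lt_top
  have h1 : ∫ ω, |(η ω : ℝ) - 1| ^ p ∂μ = ∫ k, F k ∂(μ.map η) :=
    (integral_map hη.aemeasurable hFm.aestronglyMeasurable).symm
  rw [h1, integral_countable' hInt]
  refine tsum_congr fun k => ?_
  rw [measureReal_def, hmap k, ENNReal.toReal_ofReal (by positivity), smul_eq_mul, mul_comm]

lemma aux_SP_pos {p : ℝ} (hp : 0 < p) : 0 < SP p := by
  have h0 : Real.exp (-1) ≤ SP p := by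
    have := Summable.le_tsum (aux_summableA hp) 0 (fun j _ => by positivity)
    simpa [SP] using this
  linarith [Real.exp_pos (-1)]

lemma aux_log_lower {p : ℝ} (hp : 100 ≤ p) :
    p * (Real.log p - Real.log (Real.log p)) - (1 + p + 2 * Real.log p) ≤ Real.log (SP p) := by
  have hp0 : (0:ℝ) < p := by linarith
  set L := Real.log p with hL
  have hL3 : 3 ≤ L := aux_log3 hp
  have hL0 : 0 < L := by linarith
  have h3L : 3 * L ≤ p := aux_3L hp
  set k : ℕ := ⌊p / L⌋₊ + 2 with hk
  have hq3 : 3 ≤ p / L := (le_div_iff₀ hL0).2 (by linarith)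
  have hfloor : (⌊p / L⌋₊ : ℝ) ≤ p / L := Nat.floor_le (by positivity)
  have hk1 : ((k : ℝ)) - 1 = (⌊p / L⌋₊ : ℝ) + 1 := by push_cast [hk]; ring
  have hge : p / L ≤ (k : ℝ) - 1 := by
    rw [hk1]; exact (Nat.lt_floor_add_one (p / L)).le
  have hkp : (k : ℝ) ≤ p := by
    have : (k : ℝ) = (⌊p / L⌋₊ : ℝ) + 2 := by push_cast [hk]; ring
    rw [this]
    have : p / L ≤ p / 3 := div_le_div_of_nonneg_left hp0.le (by norm_num) (by linarith)
    linarith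
  have hk2 : (2 : ℝ) ≤ (k : ℝ) := by
    have : (0:ℝ) ≤ (⌊p / L⌋₊ : ℝ) := Nat.cast_nonneg _
    push_cast [hk]; linarith
  have hkm1 : (0:ℝ) < (k : ℝ) - 1 := by nlinarith [hge, hq3]
  -- single term bound
  have habs : |(k : ℝ) - 1| = (k : ℝ) - 1 := abs_of_pos hkm1
  have hterm : ((k:ℝ) - 1) ^ p * (Real.exp (-1) / k.factorial) ≤ SP p := by
    have := Summable.le_tsum (aux_summableA hp0) k (fun j _ => by positivity)
    rwa [habs] at this
  have htermpos : 0 < ((k:ℝ) - 1) ^ p * (Real.exp (-1) / k.factorial) := by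
    have h1 : (0:ℝ) < ((k:ℝ) - 1) ^ p := Real.rpow_pos_of_pos hkm1 p
    have h2 : (0:ℝ) < (k.factorial : ℝ) := by positivity
    positivity
  have hlog1 : Real.log (((k:ℝ) - 1) ^ p * (Real.exp (-1) / k.factorial))
      ≤ Real.log (SP p) := Real.log_le_log htermpos hterm
  have hfac : (0:ℝ) < (k.factorial : ℝ) := by positivity
  have hlog2 : Real.log (((k:ℝ) - 1) ^ p * (Real.exp (-1) / k.factorial))
      = p * Real.log ((k:ℝ) - 1) + (-1 - Real.log (k.factorial : ℝ)) := by
    rw [Real.log_mul (by positivity) (by positivity), Real.log_rpow hkm1,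
      Real.log_div (Real.exp_ne_zero _) hfac.ne', Real.log_exp]
  -- estimate log (k-1)
  have hlogk1 : L - Real.log L ≤ Real.log ((k:ℝ) - 1) := by
    calc L - Real.log L = Real.log (p / L) := by
          rw [Real.log_div hp0.ne' hL0.ne']
    _ ≤ Real.log ((k:ℝ) - 1) := Real.log_le_log (by positivity) hge
  -- estimate log k!
  have hlogfac : Real.log (k.factorial : ℝ) ≤ p + 2 * L := by
    have h1 : (k.factorial : ℝ) ≤ (k : ℝ) ^ k := by
      have := Nat.factorial_le_pow k
      exact_mod_cast this
    have h2 : Real.log (k.factorial : ℝ) ≤ Real.log ((k : ℝ) ^ k) :=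
      Real.log_le_log hfac h1
    rw [Real.log_pow] at h2
    have h3 : Real.log (k : ℝ) ≤ L := Real.log_le_log (by linarith) hkp
    have h4 : (0:ℝ) ≤ Real.log (k : ℝ) := Real.log_nonneg (by linarith)
    have h5 : (k : ℝ) * Real.log (k : ℝ) ≤ (k : ℝ) * L :=
      mul_le_mul_of_nonneg_left h3 (by linarith)
    have h6 : (k : ℝ) * L ≤ (p / L + 2) * L := by
      have : (k : ℝ) ≤ p / L + 2 := by
        have : (k : ℝ) = (⌊p / L⌋₊ : ℝ) + 2 := by push_cast [hk]; ring
        linarith [hfloor]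
      exact mul_le_mul_of_nonneg_right this hL0.le
    have h7 : (p / L + 2) * L = p + 2 * L := by field_simp
    calc Real.log (k.factorial : ℝ) ≤ (k : ℝ) * Real.log (k : ℝ) := h2
    _ ≤ p + 2 * L := by rw [h7] at h6; linarith
  have hmul : p * (L - Real.log L) ≤ p * Real.log ((k:ℝ) - 1) :=
    mul_le_mul_of_nonneg_left hlogk1 hp0.le
  calc p * (L - Real.log L) - (1 + p + 2 * L)
      ≤ p * Real.log ((k:ℝ) - 1) + (-1 - Real.log (k.factorial : ℝ)) := by linarith
  _ = Real.log (((k:ℝ) - 1) ^ p * (Real.exp (-1) / k.factorial)) := hlog2.symm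
  _ ≤ Real.log (SP p) := hlog1

set_option maxHeartbeats 1000000 in
lemma aux_log_upper {p : ℝ} (hp : 100 ≤ p) :
    Real.log (SP p) ≤ Real.log 2 - 1
      + (p * Real.log (p / (Real.log p - Real.log (Real.log p))) - p) + p / Real.log p := by
  have hp0 : (0:ℝ) < p := by linarith
  set L := Real.log p with hLdef
  set LL := Real.log L with hLLdef
  have hL3 : 3 ≤ L := aux_log3 hp
  have hL0 : 0 < L := by linarith
  have hLL1 : 1 ≤ LL := aux_LL1 hp
  have hLLL : LL < L := aux_LLL hp
  set s : ℝ := L - LL with hsdef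
  have hs0 : 0 < s := by simp only [hsdef]; linarith
  set C : ℝ := p * Real.log (p / s) - p with hCdef
  have hA := aux_summableA hp0
  -- shifted series
  have hshift : Summable (fun j : ℕ =>
      |((j+1 : ℕ) : ℝ) - 1| ^ p * (Real.exp (-1) / (j+1).factorial)) :=
    (summable_nat_add_iff 1).2 hA
  have hsplit : SP p = |((0:ℕ) : ℝ) - 1| ^ p * (Real.exp (-1) / (0:ℕ).factorial)
      + ∑' j : ℕ, |((j+1 : ℕ) : ℝ) - 1| ^ p * (Real.exp (-1) / (j+1).factorial) :=
    Summable.tsum_eq_zero_add hA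
  have hA0 : |((0:ℕ) : ℝ) - 1| ^ p * (Real.exp (-1) / (0:ℕ).factorial) = Real.exp (-1) := by
    norm_num
  -- termwise bound for the shifted series
  have hG := aux_summableG hp0
  have hGB : Summable (fun j : ℕ => Real.exp (-1) * ((j:ℝ) ^ p / j.factorial)) :=
    hG.mul_left _
  have hterm : ∀ j : ℕ, |((j+1 : ℕ) : ℝ) - 1| ^ p * (Real.exp (-1) / (j+1).factorial)
      ≤ Real.exp (-1) * ((j:ℝ) ^ p / j.factorial) := by
    intro j
    have h1 : |((j+1 : ℕ) : ℝ) - 1| = (j : ℝ) := by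
      push_cast; rw [add_sub_cancel_right, abs_of_nonneg (Nat.cast_nonneg j)]
    rw [h1]
    have h2 : (j.factorial : ℝ) ≤ ((j+1).factorial : ℝ) := by
      exact_mod_cast Nat.factorial_le (Nat.le_succ j)
    have hjf : (0:ℝ) < (j.factorial : ℝ) := by positivity
    have h3 : Real.exp (-1) / ((j+1).factorial : ℝ) ≤ Real.exp (-1) / (j.factorial : ℝ) :=
      div_le_div_of_nonneg_left (Real.exp_pos _).le hjf h2
    calc (j:ℝ) ^ p * (Real.exp (-1) / (j+1).factorial)
        ≤ (j:ℝ) ^ p * (Real.exp (-1) / j.factorial) :=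
          mul_le_mul_of_nonneg_left h3 (by positivity)
    _ = Real.exp (-1) * ((j:ℝ) ^ p / j.factorial) := by ring
  have hsum1 : ∑' j : ℕ, |((j+1 : ℕ) : ℝ) - 1| ^ p * (Real.exp (-1) / (j+1).factorial)
      ≤ Real.exp (-1) * ∑' j : ℕ, ((j:ℝ) ^ p / j.factorial) := by
    rw [← tsum_mul_left]
    exact Summable.tsum_le_tsum hterm hshift hGB
  -- Chernoff bound on T
  have hexp_s : Real.exp s = p / L := by
    rw [hsdef, Real.exp_sub, hLdef, hLLdef, Real.exp_log hp0, Real.exp_log hL0]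
  have hsummexp : Summable (fun j : ℕ => Real.exp C * (Real.exp s ^ j / j.factorial)) :=
    (Real.summable_pow_div_factorial (Real.exp s)).mul_left _
  have htermC : ∀ j : ℕ, (j:ℝ) ^ p / j.factorial
      ≤ Real.exp C * (Real.exp s ^ j / j.factorial) := by
    intro j
    have hjf : (0:ℝ) < (j.factorial : ℝ) := by positivity
    have h1 : (j:ℝ) ^ p ≤ Real.exp C * Real.exp s ^ j := by
      have h2 := aux_master hp0 hs0 (Nat.cast_nonneg (α := ℝ) j)
      calc (j:ℝ) ^ p ≤ Real.exp (p * Real.log (p / s) - p + s * j) := h2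
      _ = Real.exp C * Real.exp s ^ j := by
          rw [show p * Real.log (p / s) - p + s * (j:ℝ) = C + (j:ℝ) * s by rw [hCdef]; ring,
            Real.exp_add, Real.exp_nat_mul]
    calc (j:ℝ) ^ p / j.factorial ≤ (Real.exp C * Real.exp s ^ j) / j.factorial :=
      div_le_div_of_nonneg_right h1 hjf.le
    _ = Real.exp C * (Real.exp s ^ j / j.factorial) := by ring
  have hsum2 : ∑' j : ℕ, ((j:ℝ) ^ p / j.factorial) ≤ Real.exp C * Real.exp (p / L) := by
    calc ∑' j : ℕ, ((j:ℝ) ^ p / j.factorial)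
        ≤ ∑' j : ℕ, Real.exp C * (Real.exp s ^ j / j.factorial) :=
          Summable.tsum_le_tsum htermC hG hsummexp
    _ = Real.exp C * ∑' j : ℕ, (Real.exp s ^ j / j.factorial) := tsum_mul_left
    _ = Real.exp C * Real.exp (Real.exp s) := by rw [aux_exp_tsum]
    _ = Real.exp C * Real.exp (p / L) := by rw [hexp_s]
  -- 1 ≤ exp C * exp (p/L)
  have hC0 : 0 ≤ C := by
    have hps : p / L ≤ p / s := div_le_div_of_nonneg_left hp0.le hs0 (by linarith)
    have h3 : (3:ℝ) ≤ p / L := (le_div_iff₀ hL0).2 (by linarith [aux_3L hp])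
    have he3 : Real.exp 1 ≤ 3 := by linarith [Real.exp_one_lt_d9]
    have h4 : (1:ℝ) ≤ Real.log (p / s) := by
      calc (1:ℝ) = Real.log (Real.exp 1) := (Real.log_exp 1).symm
      _ ≤ Real.log (p / s) := Real.log_le_log (Real.exp_pos 1) (by linarith)
    have h5 := mul_le_mul_of_nonneg_left h4 hp0.le
    rw [hCdef]; linarith
  have hone : 1 ≤ Real.exp C * Real.exp (p / L) := by
    rw [← Real.exp_add]
    have : (0:ℝ) ≤ C + p / L := by positivity
    calc (1:ℝ) = Real.exp 0 := Real.exp_zero.symm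
    _ ≤ Real.exp (C + p / L) := Real.exp_le_exp.2 this
  -- combine
  have hSP : SP p ≤ Real.exp (-1) * (2 * (Real.exp C * Real.exp (p / L))) := by
    rw [hsplit, hA0]
    have : ∑' j : ℕ, |((j+1 : ℕ) : ℝ) - 1| ^ p * (Real.exp (-1) / (j+1).factorial)
        ≤ Real.exp (-1) * (Real.exp C * Real.exp (p / L)) := by
      calc _ ≤ Real.exp (-1) * ∑' j : ℕ, ((j:ℝ) ^ p / j.factorial) := hsum1
      _ ≤ Real.exp (-1) * (Real.exp C * Real.exp (p / L)) :=
        mul_le_mul_of_nonneg_left hsum2 (Real.exp_pos _).le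
    have h6 := mul_le_mul_of_nonneg_left hone (Real.exp_pos (-1)).le
    linarith
  have hlog : Real.log (SP p) ≤ Real.log (Real.exp (-1) * (2 * (Real.exp C * Real.exp (p / L)))) :=
    Real.log_le_log (aux_SP_pos hp0) hSP
  have hlogeq : Real.log (Real.exp (-1) * (2 * (Real.exp C * Real.exp (p / L))))
      = -1 + (Real.log 2 + (C + p / L)) := by
    rw [Real.log_mul (Real.exp_ne_zero _) (by positivity), Real.log_exp,
      Real.log_mul (by norm_num) (by positivity), Real.log_mul (Real.exp_ne_zero _)
      (Real.exp_ne_zero _), Real.log_exp, Real.log_exp]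
  rw [hlogeq] at hlog
  rw [hCdef] at hlog
  linarith

lemma aux_logdiv : Tendsto (fun x : ℝ => Real.log x / x) atTop (nhds 0) :=
  Real.isLittleO_log_id_atTop.tendsto_div_nhds_zero

lemma aux_E_tendsto :
    Tendsto (fun p : ℝ => Real.log (SP p) / p + 1 + Real.log (Real.log p) - Real.log p)
      atTop (nhds 0) := by
  have t1 : Tendsto (fun p : ℝ => 1 / p) atTop (nhds 0) := by
    simpa only [one_div] using tendsto_inv_atTop_zero (𝕜 := ℝ)
  -- lower bound function
  have hlo : Tendsto (fun p : ℝ => -(1 + 2 * Real.log p) / p) atTop (nhds 0) := by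
    have h := (t1.neg).sub ((aux_logdiv).const_mul 2)
    have h2 : Tendsto (fun p : ℝ => -(1 / p) - 2 * (Real.log p / p)) atTop (nhds 0) := by
      simpa using h
    refine h2.congr fun p => by ring
  -- upper bound function
  have hhi : Tendsto (fun p : ℝ => (Real.log 2 - 1) / p + 1 / Real.log p
      + (Real.log (Real.log p) - Real.log (Real.log p - Real.log (Real.log p))))
      atTop (nhds 0) := by
    have c1 : Tendsto (fun p : ℝ => (Real.log 2 - 1) / p) atTop (nhds 0) := by
      have := t1.const_mul (Real.log 2 - 1)
      simpa [mul_one_div, div_eq_mul_inv] using this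
    have c2 : Tendsto (fun p : ℝ => 1 / Real.log p) atTop (nhds 0) :=
      t1.comp Real.tendsto_log_atTop
    have c3 : Tendsto (fun p : ℝ => Real.log (Real.log p)
        - Real.log (Real.log p - Real.log (Real.log p))) atTop (nhds 0) := by
      have h3 : Tendsto (fun p : ℝ => Real.log (Real.log p) / Real.log p) atTop (nhds 0) :=
        aux_logdiv.comp Real.tendsto_log_atTop
      have h4 : Tendsto (fun p : ℝ => 1 - Real.log (Real.log p) / Real.log p) atTop (nhds 1) := by
        have := tendsto_const_nhds (x := (1:ℝ)) (f := atTop).sub h3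
        simpa using this
      have h5 : Tendsto (fun p : ℝ => -Real.log (1 - Real.log (Real.log p) / Real.log p))
          atTop (nhds 0) := by
        have hc : ContinuousAt Real.log 1 := Real.continuousAt_log one_ne_zero
        have := (hc.tendsto.comp h4).neg
        simpa [Real.log_one] using this
      refine h5.congr' ?_
      filter_upwards [eventually_ge_atTop (100:ℝ)] with p hp
      have hL3 : 3 ≤ Real.log p := aux_log3 hp
      have hL0 : 0 < Real.log p := by linarith
      have hLL1 : 1 ≤ Real.log (Real.log p) := aux_LL1 hp
      have hLLL : Real.log (Real.log p) < Real.log p := aux_LLL hp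
      have hs0 : 0 < Real.log p - Real.log (Real.log p) := by linarith
      have : (1 : ℝ) - Real.log (Real.log p) / Real.log p
          = (Real.log p - Real.log (Real.log p)) / Real.log p := by field_simp
      rw [this, Real.log_div hs0.ne' hL0.ne']
      ring
    have := (c1.add c2).add c3
    simpa using this
  -- squeeze
  refine tendsto_of_tendsto_of_tendsto_of_le_of_le' hlo hhi ?_ ?_
  · filter_upwards [eventually_ge_atTop (100:ℝ)] with p hp
    have hp0 : (0:ℝ) < p := by linarith
    have h := aux_log_lower hp
    have h2 : (p * (Real.log p - Real.log (Real.log p)) - (1 + p + 2 * Real.log p)) / p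
        ≤ Real.log (SP p) / p := div_le_div_of_nonneg_right h hp0.le
    have expand : (p * (Real.log p - Real.log (Real.log p)) - (1 + p + 2 * Real.log p)) / p
        = (Real.log p - Real.log (Real.log p)) - (1 + p + 2 * Real.log p) / p := by
      field_simp
    have expand2 : (1 + p + 2 * Real.log p) / p = 1/p + 1 + 2 * (Real.log p / p) := by
      field_simp
    have expand3 : -(1 + 2 * Real.log p) / p = -(1/p) - 2 * (Real.log p / p) := by
      field_simp; ring
    rw [expand, expand2] at h2
    rw [expand3]
    linarith
  · filter_upwards [eventually_ge_atTop (100:ℝ)] with p hp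
    have hp0 : (0:ℝ) < p := by linarith
    have hL3 : 3 ≤ Real.log p := aux_log3 hp
    have hL0 : 0 < Real.log p := by linarith
    have hLL1 : 1 ≤ Real.log (Real.log p) := aux_LL1 hp
    have hLLL : Real.log (Real.log p) < Real.log p := aux_LLL hp
    have hs0 : 0 < Real.log p - Real.log (Real.log p) := by linarith
    have h := aux_log_upper hp
    have h2 : Real.log (SP p) / p ≤ (Real.log 2 - 1
        + (p * Real.log (p / (Real.log p - Real.log (Real.log p))) - p) + p / Real.log p) / p :=
      div_le_div_of_nonneg_right h hp0.le
    have hlogdiv : Real.log (p / (Real.log p - Real.log (Real.log p)))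
        = Real.log p - Real.log (Real.log p - Real.log (Real.log p)) :=
      Real.log_div hp0.ne' hs0.ne'
    have expand : (Real.log 2 - 1
        + (p * Real.log (p / (Real.log p - Real.log (Real.log p))) - p) + p / Real.log p) / p
        = (Real.log 2 - 1)/p + Real.log (p / (Real.log p - Real.log (Real.log p))) - 1
          + 1 / Real.log p := by
      field_simp; ring
    rw [expand, hlogdiv] at h2
    linarith

/-- If `η` is Poisson with parameter 1 and `ξ = η - 1`, then
`|ξ|_p ~ p/(e ln p)` as `p → ∞`, i.e. `|ξ|_p · (e ln p)/p → 1`. -/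
theorem stmt_13
    {Ω : Type*} [mΩ : MeasurableSpace Ω] (μ : Measure Ω) [IsProbabilityMeasure μ]
    (η : Ω → ℕ) (hη : Measurable η)
    (hpois : ∀ k : ℕ, μ {ω | η ω = k} = ENNReal.ofReal (Real.exp (-1) / k.factorial)) :
    Filter.Tendsto
      (fun p : ℝ => Lnorm μ p (fun ω => (η ω : ℝ) - 1) * (Real.exp 1 * Real.log p) / p)
      Filter.atTop (nhds 1) := by
  have hexp : Tendsto (fun p : ℝ =>
      Real.exp (Real.log (SP p) / p + 1 + Real.log (Real.log p) - Real.log p))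
      atTop (nhds 1) := by
    have h := (Real.continuous_exp.continuousAt (x := (0:ℝ))).tendsto.comp aux_E_tendsto
    simpa [Function.comp_def] using h
  refine Tendsto.congr' ?_ hexp
  filter_upwards [eventually_ge_atTop (100:ℝ)] with p hp
  have hp0 : (0:ℝ) < p := by linarith
  have hL3 : 3 ≤ Real.log p := aux_log3 hp
  have hL0 : 0 < Real.log p := by linarith
  have hSP := aux_SP_pos hp0
  have hint : Lnorm μ p (fun ω => (η ω : ℝ) - 1) = SP p ^ (1/p) := by
    simp only [Lnorm]
    rw [aux_integral μ η hη hpois hp0]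
  have hA : Real.log (SP p) * (1/p) = Real.log (SP p) / p := by ring
  rw [hint, Real.rpow_def_of_pos hSP, hA, eq_comm, div_eq_iff hp0.ne']
  set D := Real.log (SP p) / p with hD
  calc Real.exp D * (Real.exp 1 * Real.log p)
      = Real.exp D * (Real.exp 1 * Real.exp (Real.log (Real.log p))) := by
        rw [Real.exp_log hL0]
  _ = Real.exp (D + 1 + Real.log (Real.log p)) := by
        rw [Real.exp_add, Real.exp_add]; ring
  _ = Real.exp (D + 1 + Real.log (Real.log p) - Real.log p) * p := by
        rw [Real.exp_sub, Real.exp_log hp0, div_mul_cancel₀ _ hp0.ne']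
end
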